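/- Closed forms of the S6 gradients with respect to the selection parameters at w = 0 (from the proof of Theorem 5.1): Let d = 1, A ∈ ℝ^{n×n} diagonal and invertible, B ∈ ℝ^{n×1}, C ∈ ℝ^{1×n}, b ∈ ℝ, and write Ã = exp(softplus(b) A). Then for every input u ∈ ℝ^L, the derivatives of the final S6 output at w = 0 satisfy: ∂Γ_S6(u)_L/∂w = u_L C Σ_{j=1}^L (1 + e^{−b})^{−1} Ã^{L−j} (Ã B u_j³ + u_j² (Ã − I) B Σ_{i=j+1}^L u_i), and ∂Γ_S6(u)_L/∂b = u_L C Σ_{j=1}^L (1 + e^{−b})^{−1} Ã^{L−j} (Ã B u_j² + u_j² (L−j)(Ã − I) B). -/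

import Mathlib

open Matrix Filter Asymptotics MeasureTheory Real Topology

noncomputable section

/-- Matrix exponential over the reals. -/
def mexp {n : ℕ} (A : Matrix (Fin n) (Fin n) ℝ) : Matrix (Fin n) (Fin n) ℝ :=
  NormedSpace.exp A

/-- The softplus function `z ↦ log (1 + e^z)`. -/
def softplus (z : ℝ) : ℝ := Real.log (1 + Real.exp z)

/-- Time-varying linear state recursion: `x 0 = 0`,
`x (k+1) = Abar k *ᵥ x k + u k • Bbar k`.  (Index `k : ℕ` is the 0-based
position of the input, so `x (k+1)` is the state `x_{k+1}` after seeing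
inputs `u_1 = u 0, …, u_{k+1} = u k`.) -/
def tvState {n : ℕ} (Abar : ℕ → Matrix (Fin n) (Fin n) ℝ) (Bbar : ℕ → Fin n → ℝ)
    (u : ℕ → ℝ) : ℕ → Fin n → ℝ
  | 0 => 0
  | k + 1 => (Abar k) *ᵥ (tvState Abar Bbar u k) + u k • Bbar k

/-- Zero-padded extension of a finite scalar sequence `(u_1, …, u_L)`
(`u 0` is `u_1`, …, `u ⟨L-1⟩` is `u_L`). -/
def seq {L : ℕ} (u : Fin L → ℝ) : ℕ → ℝ := fun k => if h : k < L then u ⟨k, h⟩ else 0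

/-- Zero-padded extension of a finite vector-valued sequence. -/
def seqd {L d : ℕ} (u : Fin L → Fin d → ℝ) : ℕ → Fin d → ℝ :=
  fun k => if h : k < L then u ⟨k, h⟩ else 0

/-- Final output `Γ_S4D(u)_L` of a single-channel (`d = 1`) S4D unit:
`Ā = exp(exp(b) A)`, `B̄ = A⁻¹(Ā − I)B`, `x_k = Ā x_{k-1} + B̄ u_k`, `x_0 = 0`,
`y_k = C x_k`. -/
def s4dScalar {n : ℕ} (A : Matrix (Fin n) (Fin n) ℝ) (B C : Fin n → ℝ) (b : ℝ)
    (L : ℕ) (u : ℕ → ℝ) : ℝ :=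
  C ⬝ᵥ tvState (fun _ => mexp (Real.exp b • A))
      (fun _ => A⁻¹ *ᵥ ((mexp (Real.exp b • A) - 1) *ᵥ B)) u L

/-- Final output `Γ_S6(u)_L` of a single-channel (`d = 1`) S6 unit:
`Δ_k = softplus(w u_k + b)`, `Ā_k = exp(Δ_k A)`, `B̄_k = A⁻¹(Ā_k − I)B u_k`,
`x_k = Ā_k x_{k-1} + B̄_k u_k`, `x_0 = 0`, `y_k = (u_k C) x_k`. -/
def s6Scalar {n : ℕ} (A : Matrix (Fin n) (Fin n) ℝ) (B C : Fin n → ℝ) (w b : ℝ)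
    (L : ℕ) (u : ℕ → ℝ) : ℝ :=
  u (L - 1) *
    (C ⬝ᵥ tvState (fun k => mexp (softplus (w * u k + b) • A))
        (fun k => u k • (A⁻¹ *ᵥ ((mexp (softplus (w * u k + b) • A) - 1) *ᵥ B))) u L)

namespace S6Aux
def sState (ab bb u : ℕ → ℝ) : ℕ → ℝ
  | 0 => 0
  | k + 1 => ab k * sState ab bb u k + u k * bb k
lemma tvState_diagonal {n : ℕ} (α : ℕ → Fin n → ℝ) (Bb : ℕ → Fin n → ℝ) (u : ℕ → ℝ) :
    ∀ (k : ℕ) (i : Fin n), tvState (fun k => Matrix.diagonal (α k)) Bb u k i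
      = sState (fun k => α k i) (fun k => Bb k i) u k
  | 0, i => rfl
  | k + 1, i => by
    simp only [tvState, sState, Pi.add_apply, Pi.smul_apply, smul_eq_mul,
      Matrix.mulVec_diagonal, tvState_diagonal α Bb u k i]
lemma sState_closed (ab bb u : ℕ → ℝ) (L : ℕ) :
    sState ab bb u L
      = ∑ j ∈ Finset.range L, (∏ k ∈ Finset.Ico (j+1) L, ab k) * (u j * bb j) := by
  induction L with
  | zero => simp [sState]
  | succ L ih =>
    rw [Finset.sum_range_succ, sState, ih, Finset.mul_sum]
    congr 1
    · refine Finset.sum_congr rfl fun j hj => ?_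
      rw [Finset.mem_range] at hj
      rw [Finset.prod_Ico_succ_top (by omega)]
      ring
    · simp
lemma hasDerivAt_softplus (z : ℝ) :
    HasDerivAt softplus ((1 + Real.exp (-z))⁻¹) z := by
  have h0 : 1 + Real.exp z ≠ 0 := by positivity
  have h1 : HasDerivAt (fun z => 1 + Real.exp z) (Real.exp z) z :=
    (Real.hasDerivAt_exp z).const_add 1
  have h2 := h1.log h0
  show HasDerivAt (fun y => Real.log (1 + Real.exp y)) _ z
  convert h2 using 1
  rw [Real.exp_neg]
  rw [eq_div_iff h0]
  field_simp
  ring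
lemma mexp_smul_diagonal {n : ℕ} (a : Fin n → ℝ) (c : ℝ) :
    mexp (c • Matrix.diagonal a) = Matrix.diagonal fun i => Real.exp (c * a i) := by
  rw [mexp, ← Matrix.diagonal_smul, Matrix.exp_diagonal]
  funext i j
  by_cases h : i = j
  · subst h
    simp only [Matrix.diagonal_apply_eq]
    rw [Pi.exp_def]
    simp [← Real.exp_eq_exp_ℝ]
  · simp [Matrix.diagonal_apply_ne _ h]
lemma inv_diagonal' {n : ℕ} (a : Fin n → ℝ) (ha : ∀ i, a i ≠ 0) :
    (Matrix.diagonal a)⁻¹ = Matrix.diagonal fun i => (a i)⁻¹ := by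
  apply Matrix.inv_eq_right_inv
  rw [Matrix.diagonal_mul_diagonal]
  convert Matrix.diagonal_one with i
  exact mul_inv_cancel₀ (ha i)
lemma s6_rewrite {n : ℕ} (L : ℕ) (a B C : Fin n → ℝ) (ha : ∀ i, a i ≠ 0)
    (w b : ℝ) (U : ℕ → ℝ) :
    s6Scalar (Matrix.diagonal a) B C w b L U =
      U (L-1) * ∑ i, C i * ∑ j ∈ Finset.range L,
        (∏ k ∈ Finset.Ico (j+1) L, Real.exp (softplus (w * U k + b) * a i)) *
        (U j * (U j * ((a i)⁻¹ * ((Real.exp (softplus (w * U j + b) * a i) - 1) * B i)))) := by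
  rw [s6Scalar]
  congr 1
  have hA : (fun k => mexp (softplus (w * U k + b) • Matrix.diagonal a))
      = fun k => Matrix.diagonal (fun i => Real.exp (softplus (w * U k + b) * a i)) := by
    funext k; exact mexp_smul_diagonal a _
  have hB : (fun k => U k • ((Matrix.diagonal a)⁻¹ *ᵥ
        ((mexp (softplus (w * U k + b) • Matrix.diagonal a) - 1) *ᵥ B)))
      = fun k i => U k * ((a i)⁻¹ * ((Real.exp (softplus (w * U k + b) * a i) - 1) * B i)) := by
    funext k i
    simp [mexp_smul_diagonal, inv_diagonal' a ha, Matrix.sub_mulVec, Matrix.one_mulVec,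
      Matrix.mulVec_diagonal, sub_mul]
  rw [hA, hB, dotProduct]
  refine Finset.sum_congr rfl fun i _ => ?_
  rw [tvState_diagonal, sState_closed]
end S6Aux

set_option maxHeartbeats 1000000

/-- **Closed forms of the S6 gradients with respect to the selection parameters
at `w = 0`** (from the proof of Theorem 5.1).  With `Ã = exp(softplus(b) A)`:
`∂Γ_S6(u)_L/∂w = u_L C Σ_j (1+e^{−b})⁻¹ Ã^{L−j} (Ã B u_j³ + u_j² (Ã−I) B Σ_{i>j} u_i)`
and
`∂Γ_S6(u)_L/∂b = u_L C Σ_j (1+e^{−b})⁻¹ Ã^{L−j} (Ã B u_j² + u_j² (L−j)(Ã−I) B)`. -/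
theorem s6_gradients_closed_form
    (n L : ℕ) (hn : 1 ≤ n) (hL : 1 ≤ L)
    (A : Matrix (Fin n) (Fin n) ℝ)
    (hAdiag : ∀ i j : Fin n, i ≠ j → A i j = 0) (hA : IsUnit A.det)
    (B C : Fin n → ℝ) (b : ℝ) (u : Fin L → ℝ) :
    (deriv (fun w => s6Scalar A B C w b L (seq u)) 0 =
      u ⟨L - 1, by omega⟩ *
        (C ⬝ᵥ ∑ j : Fin L,
          (1 + Real.exp (-b))⁻¹ •
            (((mexp (softplus b • A)) ^ (L - 1 - (j : ℕ))) *ᵥ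
              ((u j ^ 3) • (mexp (softplus b • A) *ᵥ B) +
                (u j ^ 2 * ∑ i ∈ Finset.univ.filter (fun i : Fin L => j < i), u i) •
                  ((mexp (softplus b • A) - 1) *ᵥ B))))) ∧
    (deriv (fun b' => s6Scalar A B C 0 b' L (seq u)) b =
      u ⟨L - 1, by omega⟩ *
        (C ⬝ᵥ ∑ j : Fin L,
          (1 + Real.exp (-b))⁻¹ •
            (((mexp (softplus b • A)) ^ (L - 1 - (j : ℕ))) *ᵥ
              ((u j ^ 2) • (mexp (softplus b • A) *ᵥ B) +
                (u j ^ 2 * ((L - 1 - (j : ℕ) : ℕ) : ℝ)) •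
                  ((mexp (softplus b • A) - 1) *ᵥ B))))) := by
  refine ⟨?_, ?_⟩
  · classical
    set a : Fin n → ℝ := fun i => A i i with ha_def
    have hAeq : A = Matrix.diagonal a := by
      funext i j
      by_cases h : i = j
      · subst h; simp [Matrix.diagonal_apply_eq, a]
      · rw [Matrix.diagonal_apply_ne _ h]; exact hAdiag i j h
    have ha : ∀ i, a i ≠ 0 := by
      intro i h0
      rw [hAeq, Matrix.det_diagonal] at hA
      exact (isUnit_iff_ne_zero.mp hA) (Finset.prod_eq_zero (Finset.mem_univ i) h0)
    set U : ℕ → ℝ := seq u with hU_def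
    set σ : ℝ := (1 + Real.exp (-b))⁻¹ with hσ_def
    have hUc : ∀ j : Fin L, U (j : ℕ) = u j := by
      intro j; rw [hU_def]; unfold _root_.seq; rw [dif_pos j.isLt]
    have hg : ∀ (i : Fin n) (k : ℕ), HasDerivAt
        (fun w => Real.exp (softplus (w * U k + b) * a i))
        (Real.exp (softplus b * a i) * (σ * (U k * a i))) 0 := by
      intro i k
      have h1 : HasDerivAt (fun w : ℝ => w * U k + b) (U k) 0 :=
        (hasDerivAt_mul_const (U k)).add_const b
      have h2 : HasDerivAt (fun w : ℝ => softplus (w * U k + b))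
          ((1 + Real.exp (-(0 * U k + b)))⁻¹ * U k) 0 :=
        (S6Aux.hasDerivAt_softplus (0 * U k + b)).comp (h₂ := softplus) 0 h1
      have h3 := h2.mul_const (a i)
      have h4 := (Real.hasDerivAt_exp (softplus (0 * U k + b) * a i)).comp 0 h3
      refine h4.congr_deriv ?_
      simp only [zero_mul, zero_add, hσ_def]
      ring
    have hsum : ∀ i : Fin n, HasDerivAt
        (fun w => ∑ j ∈ Finset.range L,
          (∏ k ∈ Finset.Ico (j+1) L, Real.exp (softplus (w * U k + b) * a i)) *
          (U j * (U j * ((a i)⁻¹ * ((Real.exp (softplus (w * U j + b) * a i) - 1) * B i)))))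
        (∑ j ∈ Finset.range L, σ * (Real.exp (softplus b * a i) ^ (L - 1 - j) *
          (U j ^ 3 * (Real.exp (softplus b * a i) * B i) +
            (U j ^ 2 * ∑ m ∈ Finset.Ico (j+1) L, U m) *
              ((Real.exp (softplus b * a i) - 1) * B i)))) 0 := by
      intro i
      apply HasDerivAt.fun_sum
      intro j hj
      rw [Finset.mem_range] at hj
      have hprod := HasDerivAt.fun_finsetProd (x := (0:ℝ)) (u := Finset.Ico (j+1) L)
        (f := fun k w => Real.exp (softplus (w * U k + b) * a i))
        (f' := fun m => Real.exp (softplus b * a i) * (σ * (U m * a i)))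
        (fun k _ => hg i k)
      have hlast : HasDerivAt
          (fun w => U j * (U j * ((a i)⁻¹ * ((Real.exp (softplus (w * U j + b) * a i) - 1) * B i))))
          (U j * (U j * ((a i)⁻¹ * ((Real.exp (softplus b * a i) * (σ * (U j * a i))) * B i)))) 0 :=
        ((((((hg i j).sub_const 1).mul_const (B i)).const_mul ((a i)⁻¹)).const_mul (U j)).const_mul (U j))
      have hmul := hprod.mul hlast
      refine hmul.congr_deriv ?_
      simp only [zero_mul, zero_add, smul_eq_mul]
      have hsm : ∑ m ∈ Finset.Ico (j+1) L,
          (∏ _k ∈ (Finset.Ico (j+1) L).erase m, Real.exp (softplus b * a i)) *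
            (Real.exp (softplus b * a i) * (σ * (U m * a i)))
          = (∑ m ∈ Finset.Ico (j+1) L, U m) *
              (Real.exp (softplus b * a i) ^ (L - 1 - j) * (σ * a i)) := by
        rw [Finset.sum_mul]
        refine Finset.sum_congr rfl fun m hm => ?_
        rw [Finset.prod_const, Finset.card_erase_of_mem hm, Nat.card_Ico]
        rw [Finset.mem_Ico] at hm
        have h1 : L - (j+1) - 1 + 1 = L - 1 - j := by omega
        rw [← h1, pow_succ]
        ring
      rw [hsm, Finset.prod_const, Nat.card_Ico]
      have h2 : L - (j + 1) = L - 1 - j := by omega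
      rw [h2]
      field_simp [ha i]
      ring
    have hfun : (fun w => s6Scalar A B C w b L (seq u))
        = fun w => U (L-1) * ∑ i, C i * ∑ j ∈ Finset.range L,
          (∏ k ∈ Finset.Ico (j+1) L, Real.exp (softplus (w * U k + b) * a i)) *
          (U j * (U j * ((a i)⁻¹ * ((Real.exp (softplus (w * U j + b) * a i) - 1) * B i)))) := by
      funext w
      rw [hAeq, ← hU_def, S6Aux.s6_rewrite L a B C ha w b U]
    have hder := (HasDerivAt.fun_sum (fun i (_ : i ∈ Finset.univ) => (hsum i).const_mul (C i))).const_mul (U (L-1))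
    rw [hfun, hder.deriv]
    -- now algebra: LHS value = RHS
    have hUL : U (L-1) = u ⟨L - 1, by omega⟩ := by
      rw [hU_def]; unfold _root_.seq; rw [dif_pos (by omega : L - 1 < L)]
    rw [hUL, hAeq]
    congr 1
    rw [dotProduct]
    simp only [S6Aux.mexp_smul_diagonal, Matrix.diagonal_pow, Matrix.sub_mulVec,
      Matrix.one_mulVec, Matrix.mulVec_diagonal, Finset.sum_apply, Pi.add_apply,
      Pi.smul_apply, Pi.sub_apply, Pi.pow_apply, smul_eq_mul]
    refine Finset.sum_congr rfl fun i _ => ?_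
    congr 1
    rw [← Fin.sum_univ_eq_sum_range]
    refine Finset.sum_congr rfl fun j _ => ?_
    have hIco : ∑ m ∈ Finset.Ico ((j:ℕ)+1) L, U m
        = ∑ m ∈ Finset.univ.filter (fun m : Fin L => j < m), u m := by
      have h1 : Finset.Ico ((j:ℕ)+1) L = (Finset.range L).filter (fun m => (j:ℕ)+1 ≤ m) := by
        ext m; simp only [Finset.mem_Ico, Finset.mem_filter, Finset.mem_range]; omega
      rw [h1, Finset.sum_filter, ← Fin.sum_univ_eq_sum_range
        (fun m => if (j:ℕ)+1 ≤ m then U m else 0) L, Finset.sum_filter]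
      refine Finset.sum_congr rfl fun m _ => ?_
      by_cases h : j < m
      · rw [if_pos h, if_pos (by exact h), hUc m]
      · rw [if_neg h, if_neg (by omega)]
    rw [hIco, hUc j]
    ring
  · classical
    set a : Fin n → ℝ := fun i => A i i with ha_def
    have hAeq : A = Matrix.diagonal a := by
      funext i j
      by_cases h : i = j
      · subst h; simp [Matrix.diagonal_apply_eq, a]
      · rw [Matrix.diagonal_apply_ne _ h]; exact hAdiag i j h
    have ha : ∀ i, a i ≠ 0 := by
      intro i h0
      rw [hAeq, Matrix.det_diagonal] at hA
      exact (isUnit_iff_ne_zero.mp hA) (Finset.prod_eq_zero (Finset.mem_univ i) h0)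
    set U : ℕ → ℝ := seq u with hU_def
    set σ : ℝ := (1 + Real.exp (-b))⁻¹ with hσ_def
    have hUc : ∀ j : Fin L, U (j : ℕ) = u j := by
      intro j; rw [hU_def]; unfold _root_.seq; rw [dif_pos j.isLt]
    have hg : ∀ (i : Fin n) (k : ℕ), HasDerivAt
        (fun b' => Real.exp (softplus (0 * U k + b') * a i))
        (Real.exp (softplus b * a i) * (σ * a i)) b := by
      intro i k
      have h1 : HasDerivAt (fun b' : ℝ => 0 * U k + b') 1 b :=
        (hasDerivAt_id b).const_add (0 * U k)
      have h2 : HasDerivAt (fun b' : ℝ => softplus (0 * U k + b'))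
          ((1 + Real.exp (-(0 * U k + b)))⁻¹ * 1) b :=
        (S6Aux.hasDerivAt_softplus (0 * U k + b)).comp b h1
      have h3 := h2.mul_const (a i)
      have h4 := (Real.hasDerivAt_exp (softplus (0 * U k + b) * a i)).comp b h3
      refine h4.congr_deriv ?_
      simp only [zero_mul, zero_add, hσ_def]
      ring
    have hsum : ∀ i : Fin n, HasDerivAt
        (fun b' => ∑ j ∈ Finset.range L,
          (∏ k ∈ Finset.Ico (j+1) L, Real.exp (softplus (0 * U k + b') * a i)) *
          (U j * (U j * ((a i)⁻¹ * ((Real.exp (softplus (0 * U j + b') * a i) - 1) * B i)))))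
        (∑ j ∈ Finset.range L, σ * (Real.exp (softplus b * a i) ^ (L - 1 - j) *
          (U j ^ 2 * (Real.exp (softplus b * a i) * B i) +
            (U j ^ 2 * ((L - 1 - j : ℕ) : ℝ)) *
              ((Real.exp (softplus b * a i) - 1) * B i)))) b := by
      intro i
      apply HasDerivAt.fun_sum
      intro j hj
      rw [Finset.mem_range] at hj
      have hprod := HasDerivAt.fun_finsetProd (x := b) (u := Finset.Ico (j+1) L)
        (f := fun k b' => Real.exp (softplus (0 * U k + b') * a i))
        (f' := fun _m => Real.exp (softplus b * a i) * (σ * a i))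
        (fun k _ => hg i k)
      have hlast : HasDerivAt
          (fun b' => U j * (U j * ((a i)⁻¹ * ((Real.exp (softplus (0 * U j + b') * a i) - 1) * B i))))
          (U j * (U j * ((a i)⁻¹ * ((Real.exp (softplus b * a i) * (σ * a i)) * B i)))) b :=
        ((((((hg i j).sub_const 1).mul_const (B i)).const_mul ((a i)⁻¹)).const_mul (U j)).const_mul (U j))
      have hmul := hprod.mul hlast
      refine hmul.congr_deriv ?_
      simp only [zero_mul, zero_add, smul_eq_mul]
      have hsm : ∑ m ∈ Finset.Ico (j+1) L,
          (∏ _k ∈ (Finset.Ico (j+1) L).erase m, Real.exp (softplus b * a i)) *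
            (Real.exp (softplus b * a i) * (σ * a i))
          = ((L - 1 - j : ℕ) : ℝ) *
              (Real.exp (softplus b * a i) ^ (L - 1 - j) * (σ * a i)) := by
        rcases Nat.lt_or_ge (j+1) L with hlt | hge
        · have hc : ∀ m ∈ Finset.Ico (j+1) L,
              (∏ _k ∈ (Finset.Ico (j+1) L).erase m, Real.exp (softplus b * a i)) *
                (Real.exp (softplus b * a i) * (σ * a i))
              = Real.exp (softplus b * a i) ^ (L - 1 - j - 1) *
                (Real.exp (softplus b * a i) * (σ * a i)) := by
            intro m hm
            rw [Finset.prod_const, Finset.card_erase_of_mem hm, Nat.card_Ico]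
            congr 2
            omega
          rw [Finset.sum_congr rfl hc, Finset.sum_const, Nat.card_Ico, nsmul_eq_mul]
          have h3 : L - 1 - j - 1 + 1 = L - 1 - j := by omega
          have h4 : L - (j + 1) = L - 1 - j := by omega
          rw [h4]
          conv_rhs => rw [← h3, pow_succ]
          rw [← h3]
          push_cast
          ring
        · have he : Finset.Ico (j+1) L = ∅ := Finset.Ico_eq_empty (by omega)
          have h0 : L - 1 - j = 0 := by omega
          simp [he, h0]
      rw [hsm, Finset.prod_const, Nat.card_Ico]
      have h2 : L - (j + 1) = L - 1 - j := by omega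
      rw [h2]
      field_simp [ha i]
      ring
    have hfun : (fun b' => s6Scalar A B C 0 b' L (seq u))
        = fun b' => U (L-1) * ∑ i, C i * ∑ j ∈ Finset.range L,
          (∏ k ∈ Finset.Ico (j+1) L, Real.exp (softplus (0 * U k + b') * a i)) *
          (U j * (U j * ((a i)⁻¹ * ((Real.exp (softplus (0 * U j + b') * a i) - 1) * B i)))) := by
      funext b'
      rw [hAeq, ← hU_def, S6Aux.s6_rewrite L a B C ha 0 b' U]
    have hder := (HasDerivAt.fun_sum (fun i (_ : i ∈ Finset.univ) => (hsum i).const_mul (C i))).const_mul (U (L-1))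
    rw [hfun, hder.deriv]
    have hUL : U (L-1) = u ⟨L - 1, by omega⟩ := by
      rw [hU_def]; unfold _root_.seq; rw [dif_pos (by omega : L - 1 < L)]
    rw [hUL, hAeq]
    congr 1
    rw [dotProduct]
    simp only [S6Aux.mexp_smul_diagonal, Matrix.diagonal_pow, Matrix.sub_mulVec,
      Matrix.one_mulVec, Matrix.mulVec_diagonal, Finset.sum_apply, Pi.add_apply,
      Pi.smul_apply, Pi.sub_apply, Pi.pow_apply, smul_eq_mul]
    refine Finset.sum_congr rfl fun i _ => ?_
    congr 1
    rw [← Fin.sum_univ_eq_sum_range]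
    refine Finset.sum_congr rfl fun j _ => ?_
    rw [hUc j]
    ring
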